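/- (Theorem 3, global convergence of the fair Condat–Vũ method.) Let E be a finite-dimensional real inner product space (E = ℝⁿ), f₁ : E → ℝ convex and differentiable with L-Lipschitz continuous gradient (L > 0), h : E → ℝ and φ : E → ℝ convex, and σ, τ > 0 with στ < 1 − σL. Given x⁰, y⁰ ∈ E, define sequences by: x̂ᵏ⁺¹ minimizes x ↦ h(x) + (1/(2σ))‖x − (xᵏ − σ(yᵏ + ∇f₁(xᵏ)))‖²; yᵏ⁺¹ minimizes y ↦ φ(y) + (1/(2τ))‖y − (yᵏ + τ(2x̂ᵏ⁺¹ − xᵏ))‖²; and xᵏ⁺¹ := x̂ᵏ⁺¹. Assume the Lagrangian L(x,y) = f₁(x) + h(x) + ⟨x, y⟩ − φ(y) admits at least one saddle point. Then there exists a saddle point (x*, y*) of L such that (xᵏ, yᵏ) converges to (x*, y*) as k → ∞. -/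

import Mathlib

open RealInnerProductSpace Filter Set Topology

section Aux

variable {E : Type*} [NormedAddCommGroup E] [InnerProductSpace ℝ E] [CompleteSpace E]

set_option linter.unusedSectionVars false

lemma line_hasDerivAt (f : E → ℝ) (f' : E → E) (hdiff : ∀ x, HasGradientAt f (f' x) x)
    (x d : E) (t : ℝ) :
    HasDerivAt (fun s : ℝ => f (x + s • d)) ⟪f' (x + t • d), d⟫ t := by
  have hline : HasDerivAt (fun s : ℝ => x + s • d) d t := by
    simpa using ((hasDerivAt_id t).smul_const d).const_add x
  have hf := (hdiff (x + t • d)).hasFDerivAt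
  have := hf.comp_hasDerivAt t hline
  simp at this
  exact this

lemma grad_ineq_of_convex (f : E → ℝ) (f' : E → E)
    (hconv : ConvexOn ℝ Set.univ f) (hdiff : ∀ x, HasGradientAt f (f' x) x)
    (x z : E) : f x + ⟪f' x, z - x⟫ ≤ f z := by
  set d := z - x with hd
  have hder : HasDerivAt (fun s : ℝ => f (x + s • d)) ⟪f' x, d⟫ 0 := by
    simpa using line_hasDerivAt f f' hdiff x d 0
  have hslope : Tendsto (slope (fun s : ℝ => f (x + s • d)) 0) (𝓝[>] 0) (𝓝 ⟪f' x, d⟫) :=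
    (hasDerivAt_iff_tendsto_slope.1 hder).mono_left
      (nhdsWithin_mono 0 (fun t ht => ne_of_gt ht))
  have hev : ∀ᶠ t in 𝓝[>] (0:ℝ), slope (fun s : ℝ => f (x + s • d)) 0 t ≤ f z - f x := by
    filter_upwards [Ioc_mem_nhdsGT (zero_lt_one)] with t ht
    have h01 : (0:ℝ) ≤ 1 - t := by linarith [ht.2]
    have hsum : (1 - t) + t = 1 := by ring
    have ht' : (0:ℝ) ≤ t := le_of_lt ht.1
    have hcv := hconv.2 (Set.mem_univ x) (Set.mem_univ z) h01 ht' hsum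
    simp only [smul_eq_mul] at hcv
    have hxz : (1 - t) • x + t • z = x + t • d := by
      simp [hd, smul_sub, sub_smul]; abel
    rw [hxz] at hcv
    rw [slope_def_field]
    simp only [zero_smul, add_zero, sub_zero]
    rw [div_le_iff₀ ht.1]
    nlinarith [hcv]
  have := le_of_tendsto hslope hev
  linarith [this]

lemma prox_subgrad (F : E → ℝ) (hF : ConvexOn ℝ Set.univ F) (σ : ℝ) (hσ : 0 < σ)
    (a p : E) (hmin : ∀ z, F p + 1 / (2 * σ) * ‖p - a‖ ^ 2 ≤ F z + 1 / (2 * σ) * ‖z - a‖ ^ 2)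
    (z : E) : F p + ⟪σ⁻¹ • (a - p), z - p⟫ ≤ F z := by
  set d := z - p with hd
  have key : ∀ t : ℝ, 0 < t → t ≤ 1 →
      F p + ⟪σ⁻¹ • (a - p), d⟫ ≤ F z + t / (2 * σ) * ‖d‖ ^ 2 := by
    intro t ht0 ht1
    have h01 : (0:ℝ) ≤ 1 - t := by linarith
    have hsum : (1 - t) + t = 1 := by ring
    have ht' : (0:ℝ) ≤ t := le_of_lt ht0
    have hcv := hF.2 (Set.mem_univ p) (Set.mem_univ z) h01 ht' hsum
    simp only [smul_eq_mul] at hcv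
    have hxz : (1 - t) • p + t • z = p + t • d := by
      simp [hd, smul_sub, sub_smul]; abel
    rw [hxz] at hcv
    have hmin' := hmin (p + t • d)
    have hexp : ‖p + t • d - a‖ ^ 2 = ‖p - a‖ ^ 2 + 2 * t * ⟪p - a, d⟫ + t ^ 2 * ‖d‖ ^ 2 := by
      have : p + t • d - a = (p - a) + t • d := by abel
      rw [this, norm_add_sq_real, real_inner_smul_right, norm_smul]
      simp [abs_of_pos ht0]; ring
    have hinner : ⟪σ⁻¹ • (a - p), d⟫ = σ⁻¹ * ⟪a - p, d⟫ := real_inner_smul_left _ _ _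
    have hsig : (0:ℝ) < 2 * σ := by linarith
    have h2 : F p + 1 / (2 * σ) * ‖p - a‖ ^ 2 ≤ (1 - t) * F p + t * F z
        + 1 / (2 * σ) * (‖p - a‖ ^ 2 + 2 * t * ⟪p - a, d⟫ + t ^ 2 * ‖d‖ ^ 2) :=
      le_trans (hmin') (by rw [hexp] at *; nlinarith [hcv])
    have h3 : t * F p ≤ t * F z + 1 / (2 * σ) * (2 * t * ⟪p - a, d⟫ + t ^ 2 * ‖d‖ ^ 2) := by
      nlinarith [h2]
    have h4 : F p ≤ F z + σ⁻¹ * ⟪p - a, d⟫ + t / (2 * σ) * ‖d‖ ^ 2 := by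
      rw [← mul_le_mul_iff_right₀ ht0]
      have hexp2 : t * (F z + σ⁻¹ * ⟪p - a, d⟫ + t / (2 * σ) * ‖d‖ ^ 2)
          = t * F z + 1 / (2 * σ) * (2 * t * ⟪p - a, d⟫ + t ^ 2 * ‖d‖ ^ 2) := by
        field_simp
        ring
      rw [hexp2]
      exact h3
    have hflip : ⟪a - p, d⟫ = - ⟪p - a, d⟫ := by
      rw [show a - p = -(p - a) by abel, inner_neg_left]
    rw [hinner, hflip]
    nlinarith [h4]
  by_cases hdz : ‖d‖ = 0
  · have := key 1 zero_lt_one le_rfl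
    rw [hdz] at this; simpa using this
  · apply le_of_forall_pos_le_add
    intro ε hε
    have hdn : 0 < ‖d‖ ^ 2 := by positivity
    set t := min 1 (2 * σ * ε / ‖d‖ ^ 2) with htdef
    have ht0 : 0 < t := by
      apply lt_min zero_lt_one
      positivity
    have ht1 : t ≤ 1 := min_le_left _ _
    have := key t ht0 ht1
    have hbound : t / (2 * σ) * ‖d‖ ^ 2 ≤ ε := by
      have htle : t ≤ 2 * σ * ε / ‖d‖ ^ 2 := min_le_right _ _
      rw [div_mul_eq_mul_div, div_le_iff₀ (by linarith)]
      calc t * ‖d‖ ^ 2 ≤ (2 * σ * ε / ‖d‖ ^ 2) * ‖d‖ ^ 2 := by nlinarith [htle, hdn]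
        _ = ε * (2 * σ) := by field_simp
    linarith [this, hbound]

lemma descent_lemma (f : E → ℝ) (f' : E → E) (L : ℝ)
    (hdiff : ∀ x, HasGradientAt f (f' x) x)
    (hlip : ∀ a b : E, ‖f' a - f' b‖ ≤ L * ‖a - b‖) (x z : E) :
    f z ≤ f x + ⟪f' x, z - x⟫ + L / 2 * ‖z - x‖ ^ 2 := by
  set d := z - x with hd
  set c1 : ℝ := ⟪f' x, d⟫ with hc1
  set c2 : ℝ := L * ‖d‖ ^ 2 / 2 with hc2
  set G : ℝ → ℝ := fun t => f (x + t • d) - (c1 * t + c2 * t ^ 2) with hG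
  have hder : ∀ t : ℝ, HasDerivAt G (⟪f' (x + t • d), d⟫ - (c1 + c2 * (2 * t))) t := by
    intro t
    have h1 := line_hasDerivAt f f' hdiff x d t
    have h2 : HasDerivAt (fun t : ℝ => c1 * t + c2 * t ^ 2) (c1 + c2 * (2 * t)) t := by
      have ha := (hasDerivAt_id t).const_mul c1
      have hb := (hasDerivAt_pow 2 t).const_mul c2
      exact (ha.add hb).congr_deriv (by simp)
    exact h1.sub h2
  have hcont : ContinuousOn G (Set.Icc 0 1) := fun t _ =>
    ((hder t).continuousAt).continuousWithinAt
  obtain ⟨c, hc, hceq⟩ := exists_hasDerivAt_eq_slope G _ zero_lt_one hcont (fun t _ => hder t)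
  have hbound : ⟪f' (x + c • d), d⟫ - (c1 + c2 * (2 * c)) ≤ 0 := by
    have hcs : ⟪f' (x + c • d) - f' x, d⟫ ≤ ‖f' (x + c • d) - f' x‖ * ‖d‖ :=
      real_inner_le_norm _ _
    have hlip' : ‖f' (x + c • d) - f' x‖ ≤ L * (c * ‖d‖) := by
      have := hlip (x + c • d) x
      have hs : (x + c • d) - x = c • d := by abel
      rw [hs] at this
      rwa [norm_smul, Real.norm_eq_abs, abs_of_pos hc.1] at this
    have hdn : (0:ℝ) ≤ ‖d‖ := norm_nonneg _
    have h3 : ⟪f' (x + c • d) - f' x, d⟫ ≤ L * (c * ‖d‖) * ‖d‖ := by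
      calc ⟪f' (x + c • d) - f' x, d⟫ ≤ ‖f' (x + c • d) - f' x‖ * ‖d‖ := hcs
        _ ≤ L * (c * ‖d‖) * ‖d‖ := by
            apply mul_le_mul_of_nonneg_right hlip' hdn
    rw [inner_sub_left] at h3
    have : c2 * (2 * c) = L * c * ‖d‖ ^ 2 := by rw [hc2]; ring
    nlinarith [h3]
  have hxd : x + (1:ℝ) • d = z := by rw [one_smul, hd]; abel
  have hG1 : G 1 = f z - (c1 + c2) := by
    simp only [hG]
    rw [hxd]; ring
  have hG0 : G 0 = f x := by simp [hG]
  have hslope : f z - (c1 + c2) - f x ≤ 0 := by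
    rw [hG1, hG0] at hceq
    nlinarith [hbound, hceq]
  have : c1 + c2 = ⟪f' x, d⟫ + L / 2 * ‖d‖ ^ 2 := by rw [hc1, hc2]; ring
  linarith [hslope, this.le, this.ge]

lemma quad_pos (a b : ℝ) (ha : 0 < a) (hb : 0 < b) (hab : 1 < a * b) :
    ∃ c : ℝ, 0 < c ∧ ∀ u v : E,
      c * (‖u‖ ^ 2 + ‖v‖ ^ 2) ≤ a * ‖u‖ ^ 2 - 2 * ⟪u, v⟫ + b * ‖v‖ ^ 2 := by
  set s : ℝ := (a + 1 / b) / 2 with hs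
  have hba : 1 / b < a := by rw [div_lt_iff₀ hb]; nlinarith
  have hs0 : 0 < s := by rw [hs]; positivity
  have hsa : s < a := by rw [hs]; linarith
  have hsb : 1 / s < b := by
    rw [div_lt_iff₀ hs0]
    have : 1 / b < s := by rw [hs]; linarith
    calc (1:ℝ) = b * (1 / b) := by field_simp
      _ < b * s := by apply mul_lt_mul_of_pos_left this hb
  refine ⟨min (a - s) (b - 1 / s), lt_min (by linarith) (by linarith), fun u v => ?_⟩
  have hAM : 2 * ⟪u, v⟫ ≤ s * ‖u‖ ^ 2 + (1 / s) * ‖v‖ ^ 2 := by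
    have hcs : ⟪u, v⟫ ≤ ‖u‖ * ‖v‖ := real_inner_le_norm u v
    have hsq : 0 ≤ (s * ‖u‖ - ‖v‖) ^ 2 := sq_nonneg _
    have hsw : s * (1 / s) = 1 := mul_one_div_cancel hs0.ne'
    nlinarith [hcs, hsq, hs0, hsw]
  have h1 : min (a - s) (b - 1 / s) * ‖u‖ ^ 2 ≤ (a - s) * ‖u‖ ^ 2 :=
    mul_le_mul_of_nonneg_right (min_le_left _ _) (sq_nonneg _)
  have h2 : min (a - s) (b - 1 / s) * ‖v‖ ^ 2 ≤ (b - 1 / s) * ‖v‖ ^ 2 :=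
    mul_le_mul_of_nonneg_right (min_le_right _ _) (sq_nonneg _)
  nlinarith [hAM, h1, h2]

lemma key_combine (σ τ L : ℝ) (p q r s u v gk : E)
    (Hq Hu Fp Fq Fu Pv Ps : ℝ)
    (hA : Hq + ⟪σ⁻¹ • (p - q) - (r + gk), u - q⟫ ≤ Hu)
    (hB : Ps + ⟪τ⁻¹ • (r - s) + (q + q - p), v - s⟫ ≤ Pv)
    (hC : Fq ≤ Fp + ⟪gk, q - p⟫ + L / 2 * ‖q - p‖ ^ 2)
    (hD : Fp + ⟪gk, u - p⟫ ≤ Fu)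
    (hS : Fu + Hu + ⟪u, s⟫ - Ps ≤ Fq + Hq + ⟪q, v⟫ - Pv) :
    σ⁻¹ * ‖q - u‖ ^ 2 - 2 * ⟪q - u, s - v⟫ + τ⁻¹ * ‖s - v‖ ^ 2
      + ((σ⁻¹ - L) * ‖q - p‖ ^ 2 - 2 * ⟪q - p, s - r⟫ + τ⁻¹ * ‖s - r‖ ^ 2)
    ≤ σ⁻¹ * ‖p - u‖ ^ 2 - 2 * ⟪p - u, r - v⟫ + τ⁻¹ * ‖r - v‖ ^ 2 := by
  simp only [← real_inner_self_eq_norm_sq] at hC ⊢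
  simp only [inner_sub_left, inner_sub_right, inner_add_left, inner_add_right,
    real_inner_smul_left, real_inner_smul_right] at hA hB hC hD ⊢
  simp only [real_inner_comm q p, real_inner_comm r p, real_inner_comm s p,
    real_inner_comm u p, real_inner_comm v p, real_inner_comm gk p, real_inner_comm r q,
    real_inner_comm s q, real_inner_comm u q, real_inner_comm v q, real_inner_comm gk q,
    real_inner_comm s r, real_inner_comm u r, real_inner_comm v r, real_inner_comm gk r,
    real_inner_comm u s, real_inner_comm v s, real_inner_comm gk s, real_inner_comm v u,
    real_inner_comm gk u, real_inner_comm gk v] at hA hB hC hD hS ⊢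
  linarith [hA, hB, hC, hD, hS]

lemma norm_sq_tendsto_zero (g : ℕ → E)
    (hg : Tendsto (fun k => ‖g k‖ ^ 2) atTop (𝓝 0)) :
    Tendsto g atTop (𝓝 0) := by
  rw [tendsto_zero_iff_norm_tendsto_zero]
  have h2 : Tendsto (fun k => Real.sqrt (‖g k‖ ^ 2)) atTop (𝓝 (Real.sqrt 0)) :=
    (Real.continuous_sqrt.tendsto 0).comp hg
  rw [Real.sqrt_zero] at h2
  exact h2.congr fun k => Real.sqrt_sq (norm_nonneg _)

end Aux
/-- `(x̂, ŷ)` is a saddle point of the Lagrangian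
`L(x, y) = f₁(x) + h(x) + ⟨x, y⟩ − φ(y)`. -/
def IsSaddlePoint {E : Type*} [NormedAddCommGroup E] [InnerProductSpace ℝ E]
    (f₁ h φ : E → ℝ) (p : E × E) : Prop :=
  ∀ x y : E,
    f₁ p.1 + h p.1 + ⟪p.1, y⟫ - φ y ≤ f₁ p.1 + h p.1 + ⟪p.1, p.2⟫ - φ p.2 ∧
    f₁ p.1 + h p.1 + ⟪p.1, p.2⟫ - φ p.2 ≤ f₁ x + h x + ⟪x, p.2⟫ - φ p.2

set_option maxHeartbeats 1000000 in
theorem stmt_13 {E : Type*} [NormedAddCommGroup E] [InnerProductSpace ℝ E]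
    [FiniteDimensional ℝ E]
    (f₁ h φ : E → ℝ) (f₁' : E → E) (L : ℝ) (hL : 0 < L)
    (hf₁conv : ConvexOn ℝ Set.univ f₁)
    (hf₁diff : ∀ x, HasGradientAt f₁ (f₁' x) x)
    (hf₁lip : ∀ x y, ‖f₁' x - f₁' y‖ ≤ L * ‖x - y‖)
    (hhconv : ConvexOn ℝ Set.univ h)
    (hφconv : ConvexOn ℝ Set.univ φ)
    (σ τ : ℝ) (hσ : 0 < σ) (hτ : 0 < τ) (hcond : σ * τ < 1 - σ * L)
    (x y xhat : ℕ → E)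
    (hxhat : ∀ k, ∀ z : E,
      h (xhat (k + 1)) +
          1 / (2 * σ) * ‖xhat (k + 1) - (x k - σ • (y k + f₁' (x k)))‖ ^ 2 ≤
      h z + 1 / (2 * σ) * ‖z - (x k - σ • (y k + f₁' (x k)))‖ ^ 2)
    (hy : ∀ k, ∀ w : E,
      φ (y (k + 1)) +
          1 / (2 * τ) * ‖y (k + 1) - (y k + τ • (2 • xhat (k + 1) - x k))‖ ^ 2 ≤
      φ w + 1 / (2 * τ) * ‖w - (y k + τ • (2 • xhat (k + 1) - x k))‖ ^ 2)
    (hx : ∀ k, x (k + 1) = xhat (k + 1))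
    (hsaddle : ∃ p : E × E, IsSaddlePoint f₁ h φ p) :
    ∃ p : E × E, IsSaddlePoint f₁ h φ p ∧
      Filter.Tendsto (fun k => (x k, y k)) Filter.atTop (nhds p) := by
  obtain ⟨⟨u0, v0⟩, hsad0⟩ := hsaddle
  -- rewritten prox inequalities
  have hxhat' : ∀ k, ∀ z : E,
      h (x (k + 1)) + 1 / (2 * σ) * ‖x (k + 1) - (x k - σ • (y k + f₁' (x k)))‖ ^ 2 ≤
      h z + 1 / (2 * σ) * ‖z - (x k - σ • (y k + f₁' (x k)))‖ ^ 2 := by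
    intro k z; rw [hx k]; exact hxhat k z
  have hy' : ∀ k, ∀ w : E,
      φ (y (k + 1)) + 1 / (2 * τ) * ‖y (k + 1) - (y k + τ • (2 • x (k + 1) - x k))‖ ^ 2 ≤
      φ w + 1 / (2 * τ) * ‖w - (y k + τ • (2 • x (k + 1) - x k))‖ ^ 2 := by
    intro k w; rw [hx k]; exact hy k w
  -- subgradient inequalities in clean form
  have hAgen : ∀ k, ∀ z : E,
      h (x (k + 1)) + ⟪σ⁻¹ • (x k - x (k + 1)) - (y k + f₁' (x k)), z - x (k + 1)⟫ ≤ h z := by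
    intro k z
    have h0 := prox_subgrad h hhconv σ hσ (x k - σ • (y k + f₁' (x k))) (x (k + 1))
      (hxhat' k) z
    have hvec : σ⁻¹ • ((x k - σ • (y k + f₁' (x k))) - x (k + 1))
        = σ⁻¹ • (x k - x (k + 1)) - (y k + f₁' (x k)) := by
      rw [show (x k - σ • (y k + f₁' (x k))) - x (k + 1)
          = (x k - x (k + 1)) - σ • (y k + f₁' (x k)) by abel,
        smul_sub, smul_smul, inv_mul_cancel₀ (ne_of_gt hσ), one_smul]
    rwa [hvec] at h0
  have hBgen : ∀ k, ∀ w : E,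
      φ (y (k + 1)) + ⟪τ⁻¹ • (y k - y (k + 1)) + (x (k + 1) + x (k + 1) - x k),
        w - y (k + 1)⟫ ≤ φ w := by
    intro k w
    have h0 := prox_subgrad φ hφconv τ hτ (y k + τ • (2 • x (k + 1) - x k)) (y (k + 1))
      (hy' k) w
    have hvec : τ⁻¹ • ((y k + τ • (2 • x (k + 1) - x k)) - y (k + 1))
        = τ⁻¹ • (y k - y (k + 1)) + (x (k + 1) + x (k + 1) - x k) := by
      rw [show (y k + τ • (2 • x (k + 1) - x k)) - y (k + 1)
          = (y k - y (k + 1)) + τ • (2 • x (k + 1) - x k) by abel,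
        smul_add, smul_smul, inv_mul_cancel₀ (ne_of_gt hτ), one_smul, two_smul]
    rwa [hvec] at h0
  -- constants
  have h1σL : (0:ℝ) < 1 - σ * L := lt_trans (mul_pos hσ hτ) hcond
  have hstep : τ < σ⁻¹ - L := by
    have h2 : τ < (1 - σ * L) / σ := by rw [lt_div_iff₀ hσ]; nlinarith [hcond]
    have h3 : (1 - σ * L) / σ = σ⁻¹ - L := by
      rw [sub_div, one_div, mul_div_cancel_left₀ _ (ne_of_gt hσ)]
    rwa [h3] at h2
  have ha : (0:ℝ) < σ⁻¹ - L := hτ.trans hstep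
  have hb : (0:ℝ) < τ⁻¹ := by positivity
  have hab : (1:ℝ) < (σ⁻¹ - L) * τ⁻¹ := by
    have h4 : τ * τ⁻¹ = 1 := mul_inv_cancel₀ (ne_of_gt hτ)
    nlinarith [hstep, hb, h4]
  obtain ⟨c, hc0, hcW⟩ := quad_pos (E := E) (σ⁻¹ - L) τ⁻¹ ha hb hab
  have hcV : ∀ u v : E, c * (‖u‖ ^ 2 + ‖v‖ ^ 2)
      ≤ σ⁻¹ * ‖u‖ ^ 2 - 2 * ⟪u, v⟫ + τ⁻¹ * ‖v‖ ^ 2 := by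
    intro u v
    have h1 := hcW u v
    have h2 : (0:ℝ) ≤ L * ‖u‖ ^ 2 := mul_nonneg hL.le (sq_nonneg _)
    linarith
  -- the key one-step estimate
  have key : ∀ u v : E, IsSaddlePoint f₁ h φ (u, v) → ∀ k : ℕ,
      σ⁻¹ * ‖x (k + 1) - u‖ ^ 2 - 2 * ⟪x (k + 1) - u, y (k + 1) - v⟫
          + τ⁻¹ * ‖y (k + 1) - v‖ ^ 2
        + ((σ⁻¹ - L) * ‖x (k + 1) - x k‖ ^ 2
          - 2 * ⟪x (k + 1) - x k, y (k + 1) - y k⟫ + τ⁻¹ * ‖y (k + 1) - y k‖ ^ 2)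
      ≤ σ⁻¹ * ‖x k - u‖ ^ 2 - 2 * ⟪x k - u, y k - v⟫ + τ⁻¹ * ‖y k - v‖ ^ 2 := by
    intro u v hsadp k
    have hA0 := hAgen k u
    have hB0 := hBgen k v
    have hC0 := descent_lemma f₁ f₁' L hf₁diff hf₁lip (x k) (x (k + 1))
    have hD0 := grad_ineq_of_convex f₁ f₁' hf₁conv hf₁diff (x k) u
    have hS0 : f₁ u + h u + ⟪u, y (k + 1)⟫ - φ (y (k + 1))
        ≤ f₁ (x (k + 1)) + h (x (k + 1)) + ⟪x (k + 1), v⟫ - φ v :=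
      le_trans (hsadp (x (k + 1)) (y (k + 1))).1 (hsadp (x (k + 1)) (y (k + 1))).2
    exact key_combine σ τ L (x k) (x (k + 1)) (y k) (y (k + 1)) u v (f₁' (x k))
      (h (x (k + 1))) (h u) (f₁ (x k)) (f₁ (x (k + 1))) (f₁ u) (φ v) (φ (y (k + 1)))
      hA0 hB0 hC0 hD0 hS0
  -- Lyapunov sequence for the first saddle point
  set V : ℕ → ℝ := fun k =>
    σ⁻¹ * ‖x k - u0‖ ^ 2 - 2 * ⟪x k - u0, y k - v0⟫ + τ⁻¹ * ‖y k - v0‖ ^ 2 with hVdef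
  have hWnonneg : ∀ u v : E,
      (0:ℝ) ≤ (σ⁻¹ - L) * ‖u‖ ^ 2 - 2 * ⟪u, v⟫ + τ⁻¹ * ‖v‖ ^ 2 := by
    intro u v
    have := hcW u v
    nlinarith [sq_nonneg ‖u‖, sq_nonneg ‖v‖, hc0]
  have hVsucc : ∀ k, V (k + 1) ≤ V k := by
    intro k
    have h1 := key u0 v0 hsad0 k
    have h2 := hWnonneg (x (k + 1) - x k) (y (k + 1) - y k)
    simp only [hVdef]
    linarith
  have hVanti : Antitone V := antitone_nat_of_succ_le hVsucc
  have hVnonneg : ∀ k, 0 ≤ V k := by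
    intro k
    have h1 := hcV (x k - u0) (y k - v0)
    have h2 : (0:ℝ) ≤ c * (‖x k - u0‖ ^ 2 + ‖y k - v0‖ ^ 2) := by positivity
    simp only [hVdef]; linarith
  -- boundedness and convergent subsequence
  have hbound : ∀ k, ‖x k - u0‖ ^ 2 + ‖y k - v0‖ ^ 2 ≤ V 0 / c := by
    intro k
    rw [le_div_iff₀ hc0]
    have h1 := hcV (x k - u0) (y k - v0)
    have h2 : V k ≤ V 0 := hVanti (Nat.zero_le k)
    simp only [hVdef] at h2 ⊢
    nlinarith [h1, h2]
  set R := Real.sqrt (V 0 / c) with hR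
  have hmem : ∀ k, (x k, y k) ∈ Metric.closedBall ((u0, v0) : E × E) R := by
    intro k
    rw [Metric.mem_closedBall, Prod.dist_eq, max_le_iff]
    have hx2 : ‖x k - u0‖ ^ 2 ≤ V 0 / c := by
      have := hbound k; nlinarith [sq_nonneg ‖y k - v0‖]
    have hy2 : ‖y k - v0‖ ^ 2 ≤ V 0 / c := by
      have := hbound k; nlinarith [sq_nonneg ‖x k - u0‖]
    constructor
    · rw [dist_eq_norm, hR]
      exact Real.le_sqrt_of_sq_le hx2
    · rw [dist_eq_norm, hR]
      exact Real.le_sqrt_of_sq_le hy2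
  obtain ⟨zbar, -, ℓ, hℓmono, hℓlim⟩ :=
    tendsto_subseq_of_bounded Metric.isBounded_closedBall hmem
  have hℓtop : Tendsto ℓ atTop atTop := hℓmono.tendsto_atTop
  have hx1 : Tendsto (fun j => x (ℓ j)) atTop (𝓝 zbar.1) :=
    (continuous_fst.tendsto zbar).comp hℓlim
  have hy1 : Tendsto (fun j => y (ℓ j)) atTop (𝓝 zbar.2) :=
    (continuous_snd.tendsto zbar).comp hℓlim
  -- differences tend to zero
  have hVbdd : BddBelow (Set.range V) := ⟨0, fun w ⟨k, hk⟩ => hk ▸ hVnonneg k⟩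
  have hVlim : Tendsto V atTop (𝓝 (⨅ k, V k)) := tendsto_atTop_ciInf hVanti hVbdd
  have hdiff0 : Tendsto (fun k => V k - V (k + 1)) atTop (𝓝 0) := by
    have h2 : Tendsto (fun k => V (k + 1)) atTop (𝓝 (⨅ k, V k)) :=
      hVlim.comp (tendsto_add_atTop_nat 1)
    simpa using hVlim.sub h2
  have hWle : ∀ k, c * (‖x (k + 1) - x k‖ ^ 2 + ‖y (k + 1) - y k‖ ^ 2)
      ≤ V k - V (k + 1) := by
    intro k
    have h1 := key u0 v0 hsad0 k
    have h2 := hcW (x (k + 1) - x k) (y (k + 1) - y k)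
    simp only [hVdef]
    linarith
  have hsum0 : Tendsto (fun k => ‖x (k + 1) - x k‖ ^ 2 + ‖y (k + 1) - y k‖ ^ 2)
      atTop (𝓝 0) := by
    have hup : ∀ k, ‖x (k + 1) - x k‖ ^ 2 + ‖y (k + 1) - y k‖ ^ 2
        ≤ (V k - V (k + 1)) / c := by
      intro k; rw [le_div_iff₀ hc0]; have := hWle k; nlinarith
    have hdc : Tendsto (fun k => (V k - V (k + 1)) / c) atTop (𝓝 0) := by
      simpa using hdiff0.div_const c
    exact squeeze_zero (fun k => by positivity) hup hdc
  have hΔx : Tendsto (fun k => x (k + 1) - x k) atTop (𝓝 0) := by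
    apply norm_sq_tendsto_zero
    exact squeeze_zero (fun k => sq_nonneg _)
      (fun k => by nlinarith [sq_nonneg ‖y (k + 1) - y k‖]) hsum0
  have hΔy : Tendsto (fun k => y (k + 1) - y k) atTop (𝓝 0) := by
    apply norm_sq_tendsto_zero
    exact squeeze_zero (fun k => sq_nonneg _)
      (fun k => by nlinarith [sq_nonneg ‖x (k + 1) - x k‖]) hsum0
  -- shifted subsequence limits
  have hx2 : Tendsto (fun j => x (ℓ j + 1)) atTop (𝓝 zbar.1) := by
    have heq : (fun j => x (ℓ j + 1))
        = fun j => x (ℓ j) + (x (ℓ j + 1) - x (ℓ j)) := funext fun j => by abel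
    rw [heq]
    simpa using hx1.add (hΔx.comp hℓtop)
  have hy2 : Tendsto (fun j => y (ℓ j + 1)) atTop (𝓝 zbar.2) := by
    have heq : (fun j => y (ℓ j + 1))
        = fun j => y (ℓ j) + (y (ℓ j + 1) - y (ℓ j)) := funext fun j => by abel
    rw [heq]
    simpa using hy1.add (hΔy.comp hℓtop)
  -- continuity facts
  have hf₁'cont : Continuous f₁' := by
    have : LipschitzWith (Real.toNNReal L) f₁' := by
      apply LipschitzWith.of_dist_le_mul
      intro a b
      rw [dist_eq_norm, dist_eq_norm, Real.coe_toNNReal L hL.le]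
      exact hf₁lip a b
    exact this.continuous
  have hhcont : Continuous h := by
    rw [← continuousOn_univ]
    exact hhconv.continuousOn isOpen_univ
  have hφcont : Continuous φ := by
    rw [← continuousOn_univ]
    exact hφconv.continuousOn isOpen_univ
  have hgk : Tendsto (fun j => f₁' (x (ℓ j))) atTop (𝓝 (f₁' zbar.1)) :=
    (hf₁'cont.tendsto zbar.1).comp hx1
  -- limiting subgradient inequalities
  have hAinf : ∀ z : E, h zbar.1 + ⟪-(zbar.2 + f₁' zbar.1), z - zbar.1⟫ ≤ h z := by
    intro z
    have hvlim : Tendsto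
        (fun j => σ⁻¹ • (x (ℓ j) - x (ℓ j + 1)) - (y (ℓ j) + f₁' (x (ℓ j))))
        atTop (𝓝 (-(zbar.2 + f₁' zbar.1))) := by
      have h1 : Tendsto (fun j => x (ℓ j) - x (ℓ j + 1)) atTop (𝓝 0) := by
        have := (hΔx.comp hℓtop).neg
        simpa using this
      have h2 : Tendsto (fun j => σ⁻¹ • (x (ℓ j) - x (ℓ j + 1))) atTop (𝓝 0) := by
        simpa using h1.const_smul σ⁻¹
      have h3 : Tendsto (fun j => y (ℓ j) + f₁' (x (ℓ j))) atTop
          (𝓝 (zbar.2 + f₁' zbar.1)) := hy1.add hgk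
      simpa using h2.sub h3
    have hLHS : Tendsto
        (fun j => h (x (ℓ j + 1)) + ⟪σ⁻¹ • (x (ℓ j) - x (ℓ j + 1))
          - (y (ℓ j) + f₁' (x (ℓ j))), z - x (ℓ j + 1)⟫)
        atTop (𝓝 (h zbar.1 + ⟪-(zbar.2 + f₁' zbar.1), z - zbar.1⟫)) := by
      apply Tendsto.add
      · exact (hhcont.tendsto zbar.1).comp hx2
      · exact hvlim.inner (tendsto_const_nhds.sub hx2)
    exact le_of_tendsto hLHS (Filter.Eventually.of_forall fun j => hAgen (ℓ j) z)
  have hBinf : ∀ w : E, φ zbar.2 + ⟪zbar.1, w - zbar.2⟫ ≤ φ w := by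
    intro w
    have hvlim : Tendsto
        (fun j => τ⁻¹ • (y (ℓ j) - y (ℓ j + 1)) + (x (ℓ j + 1) + x (ℓ j + 1) - x (ℓ j)))
        atTop (𝓝 zbar.1) := by
      have h1 : Tendsto (fun j => y (ℓ j) - y (ℓ j + 1)) atTop (𝓝 0) := by
        have := (hΔy.comp hℓtop).neg
        simpa using this
      have h2 : Tendsto (fun j => τ⁻¹ • (y (ℓ j) - y (ℓ j + 1))) atTop (𝓝 0) := by
        simpa using h1.const_smul τ⁻¹
      have h3 : Tendsto (fun j => x (ℓ j + 1) + x (ℓ j + 1) - x (ℓ j)) atTop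
          (𝓝 zbar.1) := by
        have := (hx2.add hx2).sub hx1
        simpa using this
      simpa using h2.add h3
    have hLHS : Tendsto
        (fun j => φ (y (ℓ j + 1)) + ⟪τ⁻¹ • (y (ℓ j) - y (ℓ j + 1))
          + (x (ℓ j + 1) + x (ℓ j + 1) - x (ℓ j)), w - y (ℓ j + 1)⟫)
        atTop (𝓝 (φ zbar.2 + ⟪zbar.1, w - zbar.2⟫)) := by
      apply Tendsto.add
      · exact (hφcont.tendsto zbar.2).comp hy2
      · exact hvlim.inner (tendsto_const_nhds.sub hy2)
    exact le_of_tendsto hLHS (Filter.Eventually.of_forall fun j => hBgen (ℓ j) w)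
  -- zbar is a saddle point
  have hsadbar : IsSaddlePoint f₁ h φ zbar := by
    intro xx yy
    constructor
    · have hB1 := hBinf yy
      rw [inner_sub_right] at hB1
      linarith
    · have hD1 := grad_ineq_of_convex f₁ f₁' hf₁conv hf₁diff zbar.1 xx
      have hA1 := hAinf xx
      simp only [inner_neg_left, inner_add_left, inner_sub_right] at hA1 hD1
      have hcomm1 : ⟪zbar.2, xx⟫ = ⟪xx, zbar.2⟫ := real_inner_comm _ _
      have hcomm2 : ⟪zbar.2, zbar.1⟫ = ⟪zbar.1, zbar.2⟫ := real_inner_comm _ _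
      linarith
  refine ⟨zbar, hsadbar, ?_⟩
  -- final convergence via the Lyapunov function at zbar
  set V2 : ℕ → ℝ := fun k =>
    σ⁻¹ * ‖x k - zbar.1‖ ^ 2 - 2 * ⟪x k - zbar.1, y k - zbar.2⟫
      + τ⁻¹ * ‖y k - zbar.2‖ ^ 2 with hV2def
  have hsadbar' : IsSaddlePoint f₁ h φ (zbar.1, zbar.2) := by
    rwa [Prod.mk.eta]
  have hV2succ : ∀ k, V2 (k + 1) ≤ V2 k := by
    intro k
    have h1 := key zbar.1 zbar.2 hsadbar' k
    have h2 := hWnonneg (x (k + 1) - x k) (y (k + 1) - y k)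
    simp only [hV2def]
    linarith
  have hV2anti : Antitone V2 := antitone_nat_of_succ_le hV2succ
  have hV2nonneg : ∀ k, 0 ≤ V2 k := by
    intro k
    have h1 := hcV (x k - zbar.1) (y k - zbar.2)
    have h2 : (0:ℝ) ≤ c * (‖x k - zbar.1‖ ^ 2 + ‖y k - zbar.2‖ ^ 2) := by positivity
    simp only [hV2def]; linarith
  have hV2sub : Tendsto (fun j => V2 (ℓ j)) atTop (𝓝 0) := by
    have hdx : Tendsto (fun j => x (ℓ j) - zbar.1) atTop (𝓝 0) := by
      simpa using hx1.sub_const zbar.1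
    have hdy : Tendsto (fun j => y (ℓ j) - zbar.2) atTop (𝓝 0) := by
      simpa using hy1.sub_const zbar.2
    have hnx : Tendsto (fun j => ‖x (ℓ j) - zbar.1‖ ^ 2) atTop (𝓝 0) := by
      have := (hdx.norm.pow 2)
      simpa using this
    have hny : Tendsto (fun j => ‖y (ℓ j) - zbar.2‖ ^ 2) atTop (𝓝 0) := by
      have := (hdy.norm.pow 2)
      simpa using this
    have hin : Tendsto (fun j => ⟪x (ℓ j) - zbar.1, y (ℓ j) - zbar.2⟫) atTop (𝓝 0) := by
      have := hdx.inner (𝕜 := ℝ) hdy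
      simpa using this
    have : Tendsto (fun j => σ⁻¹ * ‖x (ℓ j) - zbar.1‖ ^ 2
        - 2 * ⟪x (ℓ j) - zbar.1, y (ℓ j) - zbar.2⟫
        + τ⁻¹ * ‖y (ℓ j) - zbar.2‖ ^ 2) atTop (𝓝 0) := by
      have := ((hnx.const_mul σ⁻¹).sub (hin.const_mul 2)).add (hny.const_mul τ⁻¹)
      simpa using this
    simpa [hV2def] using this
  have hV2bdd : BddBelow (Set.range V2) := ⟨0, fun w ⟨k, hk⟩ => hk ▸ hV2nonneg k⟩
  have hV2lim0 : Tendsto V2 atTop (𝓝 0) := by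
    have h1 : Tendsto V2 atTop (𝓝 (⨅ k, V2 k)) := tendsto_atTop_ciInf hV2anti hV2bdd
    have h2 : Tendsto (fun j => V2 (ℓ j)) atTop (𝓝 (⨅ k, V2 k)) := h1.comp hℓtop
    have h3 : (⨅ k, V2 k) = 0 := tendsto_nhds_unique h2 hV2sub
    rwa [h3] at h1
  have hfinal : Tendsto (fun k => ‖x k - zbar.1‖ ^ 2 + ‖y k - zbar.2‖ ^ 2)
      atTop (𝓝 0) := by
    have hup : ∀ k, ‖x k - zbar.1‖ ^ 2 + ‖y k - zbar.2‖ ^ 2 ≤ V2 k / c := by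
      intro k
      rw [le_div_iff₀ hc0]
      have := hcV (x k - zbar.1) (y k - zbar.2)
      simp only [hV2def]
      nlinarith
    have hdc : Tendsto (fun k => V2 k / c) atTop (𝓝 0) := by
      simpa using hV2lim0.div_const c
    exact squeeze_zero (fun k => by positivity) hup hdc
  have hxlim : Tendsto x atTop (𝓝 zbar.1) := by
    rw [tendsto_iff_norm_sub_tendsto_zero]
    have h1 : Tendsto (fun k => x k - zbar.1) atTop (𝓝 0) := by
      apply norm_sq_tendsto_zero
      exact squeeze_zero (fun k => sq_nonneg _)
        (fun k => by nlinarith [sq_nonneg ‖y k - zbar.2‖]) hfinal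
    rw [tendsto_zero_iff_norm_tendsto_zero] at h1
    exact h1
  have hylim : Tendsto y atTop (𝓝 zbar.2) := by
    rw [tendsto_iff_norm_sub_tendsto_zero]
    have h1 : Tendsto (fun k => y k - zbar.2) atTop (𝓝 0) := by
      apply norm_sq_tendsto_zero
      exact squeeze_zero (fun k => sq_nonneg _)
        (fun k => by nlinarith [sq_nonneg ‖x k - zbar.1‖]) hfinal
    rw [tendsto_zero_iff_norm_tendsto_zero] at h1
    exact h1
  have := hxlim.prodMk_nhds hylim
  rwa [Prod.mk.eta] at this
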